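/- Let ψ̂(t) = exp(−2π²t²) and h = 1/2^ℓ with integer ℓ ≥ 2, and let m < 2^{ℓ−1} be a positive integer (so 0 < hm < 1/2). Then the remainder g₁ of the level-one quasi-interpolation error of c_m, g₁ = −ψ̂(hm+2)c_{m+1/h} − Σ_{k≥3}(ψ̂(hm+k)c_{m+k/h} + ψ̂(hm−k)c_{m−k/h}), satisfies ‖g₁‖ ≤ ψ̂(2) + Σ_{k=3}^∞ (ψ̂(k) + ψ̂(k − 1/2)) ≤ 2·ψ̂(2). -/

import Mathlib

open Real

lemma mexp {x y : ℝ} (hx : 0 ≤ x) (hxy : x ≤ y) :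
    Real.exp (-2 * Real.pi ^ 2 * y ^ 2) ≤ Real.exp (-2 * Real.pi ^ 2 * x ^ 2) := by
  apply Real.exp_le_exp.2
  have h1 : x ^ 2 ≤ y ^ 2 := pow_le_pow_left₀ hx hxy 2
  have h2 : (0:ℝ) ≤ 2 * Real.pi ^ 2 := by positivity
  nlinarith

lemma sumexp (c : ℝ) (hc : 0 ≤ c) :
    Summable (fun k : ℕ => Real.exp (-2 * Real.pi ^ 2 * ((k : ℝ) + c) ^ 2)) := by
  refine Summable.of_nonneg_of_le (fun k => (Real.exp_pos _).le) (fun k => ?_)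
    (summable_geometric_of_lt_one (Real.exp_pos (-1)).le
      (Real.exp_lt_one_iff.2 (by norm_num)))
  rw [← Real.exp_nat_mul]
  apply Real.exp_le_exp.2
  have hk : (k : ℝ) ≤ (k : ℝ) ^ 2 := by exact_mod_cast Nat.le_self_pow two_ne_zero k
  have hk0 : (0 : ℝ) ≤ (k : ℝ) := Nat.cast_nonneg k
  nlinarith [Real.pi_gt_three, mul_nonneg hc (by positivity : (0:ℝ) ≤ 2 * k + c),
    sq_nonneg ((k : ℝ) + c), sq_nonneg (Real.pi - 3)]

set_option maxHeartbeats 1000000 in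
/-- Bound on the Wiener norm of the level-one remainder `g₁`: with
`ψ̂(t) = exp(−2π²t²)`, `h = 1/2^ℓ` (`ℓ ≥ 2`) and `0 < m < 2^{ℓ−1}` an integer,
`‖g₁‖ = ψ̂(hm+2) + Σ_{k≥3}(ψ̂(hm+k) + |ψ̂(hm−k)|) ≤ ψ̂(2) + Σ_{k≥3}(ψ̂(k)+ψ̂(k−1/2))
 ≤ 2ψ̂(2)`. -/
theorem remainder_level_one_bound (l : ℕ) (hl : 2 ≤ l) (m : ℕ) (hm0 : 0 < m)
    (hm : m < 2 ^ (l - 1)) (h : ℝ) (hh : h = 1 / 2 ^ l) :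
    Real.exp (-2 * Real.pi ^ 2 * (h * m + 2) ^ 2) +
        (∑' k : ℕ, (Real.exp (-2 * Real.pi ^ 2 * (h * m + ((k : ℝ) + 3)) ^ 2) +
          |Real.exp (-2 * Real.pi ^ 2 * (h * m - ((k : ℝ) + 3)) ^ 2)|))
      ≤ Real.exp (-2 * Real.pi ^ 2 * (2 : ℝ) ^ 2) +
        (∑' k : ℕ, (Real.exp (-2 * Real.pi ^ 2 * ((k : ℝ) + 3) ^ 2) +
          Real.exp (-2 * Real.pi ^ 2 * (((k : ℝ) + 3) - 1 / 2) ^ 2))) ∧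
    Real.exp (-2 * Real.pi ^ 2 * (2 : ℝ) ^ 2) +
        (∑' k : ℕ, (Real.exp (-2 * Real.pi ^ 2 * ((k : ℝ) + 3) ^ 2) +
          Real.exp (-2 * Real.pi ^ 2 * (((k : ℝ) + 3) - 1 / 2) ^ 2)))
      ≤ 2 * Real.exp (-2 * Real.pi ^ 2 * (2 : ℝ) ^ 2) := by
  have hhpos : 0 < h := by rw [hh]; positivity
  have ha0 : 0 ≤ h * m := by positivity
  have ha : h * m ≤ 1 / 2 := by
    have h2 : (2:ℝ) ^ l = 2 ^ (l - 1) * 2 := by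
      rw [← pow_succ]; congr 1; omega
    have hmr : (m:ℝ) ≤ 2 ^ (l - 1) := by
      exact_mod_cast hm.le
    rw [hh]
    rw [div_mul_eq_mul_div, one_mul, div_le_div_iff₀ (by positivity) (by norm_num)]
    rw [h2]; nlinarith [pow_pos (by norm_num : (0:ℝ) < 2) (l-1)]
  -- summability of the four series
  have S1 : Summable (fun k : ℕ =>
      Real.exp (-2 * Real.pi ^ 2 * (h * m + ((k : ℝ) + 3)) ^ 2)) :=
    (sumexp (h * m + 3) (by linarith)).congr (fun k => by congr 1; ring)
  have S2 : Summable (fun k : ℕ =>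
      |Real.exp (-2 * Real.pi ^ 2 * (h * m - ((k : ℝ) + 3)) ^ 2)|) :=
    (sumexp (3 - h * m) (by linarith)).congr (fun k => by
      rw [abs_of_pos (Real.exp_pos _)]; congr 1; ring)
  have S3 : Summable (fun k : ℕ => Real.exp (-2 * Real.pi ^ 2 * ((k : ℝ) + 3) ^ 2)) :=
    sumexp 3 (by norm_num)
  have S4 : Summable (fun k : ℕ =>
      Real.exp (-2 * Real.pi ^ 2 * (((k : ℝ) + 3) - 1 / 2) ^ 2)) :=
    (sumexp (5/2) (by norm_num)).congr (fun k => by congr 1; ring)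
  have SL := S1.add S2
  have SR := S3.add S4
  constructor
  · apply add_le_add
    · exact mexp (by norm_num) (by linarith)
    · refine Summable.tsum_le_tsum (fun k => ?_) SL SR
      have hk0 : (0:ℝ) ≤ (k:ℝ) := Nat.cast_nonneg k
      apply add_le_add
      · exact mexp (by linarith) (by linarith)
      · rw [abs_of_pos (Real.exp_pos _)]
        have he : (h * m - ((k:ℝ) + 3)) ^ 2 = (((k:ℝ) + 3) - h * m) ^ 2 := by ring
        rw [he]
        exact mexp (by linarith) (by linarith)
  · -- second inequality
    obtain ⟨C, hC⟩ : ∃ C, C = Real.exp (-2 * Real.pi ^ 2 * (25/4 : ℝ)) := ⟨_, rfl⟩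
    obtain ⟨r, hrdef⟩ : ∃ r, r = Real.exp (-10 * Real.pi ^ 2) := ⟨_, rfl⟩
    have hr0 : (0:ℝ) ≤ r := hrdef ▸ (Real.exp_pos _).le
    have hpi3 := Real.pi_gt_three
    have hr1 : r < 1 := hrdef ▸ Real.exp_lt_one_iff.2 (by nlinarith)
    have key : ∀ k : ℕ,
        Real.exp (-2 * Real.pi ^ 2 * ((k : ℝ) + 3) ^ 2) +
          Real.exp (-2 * Real.pi ^ 2 * (((k : ℝ) + 3) - 1 / 2) ^ 2)
        ≤ 2 * C * r ^ k := by
      intro k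
      have hk0 : (0:ℝ) ≤ (k:ℝ) := Nat.cast_nonneg k
      rw [hC, hrdef, ← Real.exp_nat_mul, mul_assoc 2, ← Real.exp_add, two_mul]
      apply add_le_add <;> apply Real.exp_le_exp.2
      · nlinarith [sq_nonneg Real.pi, mul_nonneg (sq_nonneg Real.pi) hk0,
          mul_nonneg (sq_nonneg Real.pi) (mul_nonneg hk0 hk0)]
      · nlinarith [sq_nonneg Real.pi, mul_nonneg (sq_nonneg Real.pi) hk0,
          mul_nonneg (sq_nonneg Real.pi) (mul_nonneg hk0 hk0)]
    have hgs : Summable (fun k : ℕ => 2 * C * r ^ k) :=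
      (summable_geometric_of_lt_one hr0 hr1).mul_left _
    have htsum : (∑' k : ℕ, (Real.exp (-2 * Real.pi ^ 2 * ((k : ℝ) + 3) ^ 2) +
          Real.exp (-2 * Real.pi ^ 2 * (((k : ℝ) + 3) - 1 / 2) ^ 2)))
        ≤ 2 * C * (1 - r)⁻¹ := by
      calc _ ≤ ∑' k : ℕ, 2 * C * r ^ k := Summable.tsum_le_tsum key SR hgs
        _ = 2 * C * (1 - r)⁻¹ := by
            rw [tsum_mul_left, tsum_geometric_of_lt_one hr0 hr1]
    -- numeric bounds
    have hexp2 : (3:ℝ) ≤ Real.exp 2 := by linarith [Real.add_one_le_exp (2:ℝ)]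
    have hme : Real.exp (-2) * Real.exp 2 = 1 := by rw [← Real.exp_add]; norm_num
    have he2 : Real.exp (-2) ≤ 1/3 := by nlinarith [(Real.exp_pos (-2)).le]
    have hrle : r ≤ 1/3 := by
      have : r ≤ Real.exp (-2) := hrdef ▸ Real.exp_le_exp.2 (by nlinarith)
      linarith
    have hinv : (1 - r)⁻¹ ≤ 2 := by
      rw [show (2:ℝ) = ((1:ℝ)/2)⁻¹ by norm_num]
      exact inv_anti₀ (by norm_num) (by linarith)
    have hCpos : (0:ℝ) < C := hC ▸ Real.exp_pos _
    have hCD : 4 * C ≤ Real.exp (-2 * Real.pi ^ 2 * (2:ℝ) ^ 2) := by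
      have hsplit : C = Real.exp (-2 * Real.pi ^ 2 * (2:ℝ) ^ 2) *
          Real.exp (-(9/2) * Real.pi ^ 2) := by
        rw [hC, ← Real.exp_add]; ring_nf
      have h4 : Real.exp (-(9/2) * Real.pi ^ 2) ≤ Real.exp (-4) :=
        Real.exp_le_exp.2 (by nlinarith)
      have h5 : Real.exp (-4) = Real.exp (-2) * Real.exp (-2) := by
        rw [← Real.exp_add]; norm_num
      have h6 : Real.exp (-(9/2) * Real.pi ^ 2) ≤ 1/4 := by
        nlinarith [(Real.exp_pos (-2)).le]
      rw [hsplit]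
      have h7 := mul_le_mul_of_nonneg_left h6
        (Real.exp_pos (-2 * Real.pi ^ 2 * (2:ℝ) ^ 2)).le
      linarith [h7]
    have hT : 2 * C * (1 - r)⁻¹ ≤ 4 * C := by
      have := mul_le_mul_of_nonneg_left hinv (by positivity : (0:ℝ) ≤ 2 * C)
      linarith
    rw [two_mul]
    exact add_le_add_right (htsum.trans (hT.trans hCD)) _
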